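/- arXiv:2502.01889 — 4 statements merged into one kernel-verified Lean document; each statement's English description precedes it below -/
import Mathlib

section
/- Let P, Q be probability measures on ℝ^d, let F and G be nonempty sets of functions ℝ^d → ℝ with every g ∈ G differentiable, let τ : ℝ^d → ℝ, and let 0 ≤ λ₁ < λ₂. Suppose (f₁, g₁) ∈ F × G is a saddle point of (f,g) ↦ V_{P,Q}(f,g) + λ₁ s_τ(g) on F × G, and (f₂, g₂) ∈ F × G is a saddle point of (f,g) ↦ V_{P,Q}(f,g) + λ₂ s_τ(g) on F × G; that is, for i = 1,2: V_{P,Q}(f, gᵢ) + λᵢ s_τ(gᵢ) ≤ V_{P,Q}(fᵢ, gᵢ) + λᵢ s_τ(gᵢ) for all f ∈ F, and V_{P,Q}(fᵢ, gᵢ) + λᵢ s_τ(gᵢ) ≤ V_{P,Q}(fᵢ, g) + λᵢ s_τ(g) for all g ∈ G. Then s_τ(g₁) ≥ s_τ(g₂): the sparsity penalty of the optimal potential is non-increasing in the regularization intensity λ. -/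
open MeasureTheory
open scoped RealInnerProductSpace

/-- The minimax dual objective `V_{P,Q}(f,g)` of Makkuva et al., used in the paper. -/
noncomputable def VPQ {d : ℕ} (P Q : Measure (EuclideanSpace ℝ (Fin d)))
    (f g : EuclideanSpace ℝ (Fin d) → ℝ) : ℝ :=
  -∫ x, f x ∂P - ∫ y, (⟪y, gradient g y⟫ - f (gradient g y)) ∂Q

/-- The sparsity functional `s_τ(g) = ∫ τ(∇g(y) − y) dQ(y)`. -/
noncomputable def sPen {d : ℕ} (Q : Measure (EuclideanSpace ℝ (Fin d)))
    (τ : EuclideanSpace ℝ (Fin d) → ℝ) (g : EuclideanSpace ℝ (Fin d) → ℝ) : ℝ :=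
  ∫ y, τ (gradient g y - y) ∂Q

/-- Theorem 4.5 of the paper: if `(f₁,g₁)` and `(f₂,g₂)` are saddle points of the
regularized objective for intensities `0 ≤ λ₁ < λ₂`, then `s_τ(g₁) ≥ s_τ(g₂)`:
the sparsity penalty of the optimal potential is non-increasing in `λ`. -/
theorem sparsity_monotone {d : ℕ} (P Q : Measure (EuclideanSpace ℝ (Fin d)))
    [IsProbabilityMeasure P] [IsProbabilityMeasure Q]
    (F G : Set (EuclideanSpace ℝ (Fin d) → ℝ)) (hF : F.Nonempty) (hG : G.Nonempty)
    (hGdiff : ∀ g ∈ G, Differentiable ℝ g)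
    (τ : EuclideanSpace ℝ (Fin d) → ℝ)
    (lam₁ lam₂ : ℝ) (hlam₁ : 0 ≤ lam₁) (hlam : lam₁ < lam₂)
    (f₁ g₁ f₂ g₂ : EuclideanSpace ℝ (Fin d) → ℝ)
    (hf₁ : f₁ ∈ F) (hg₁ : g₁ ∈ G) (hf₂ : f₂ ∈ F) (hg₂ : g₂ ∈ G)
    (hsaddle₁f : ∀ f ∈ F, VPQ P Q f g₁ + lam₁ * sPen Q τ g₁
      ≤ VPQ P Q f₁ g₁ + lam₁ * sPen Q τ g₁)
    (hsaddle₁g : ∀ g ∈ G, VPQ P Q f₁ g₁ + lam₁ * sPen Q τ g₁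
      ≤ VPQ P Q f₁ g + lam₁ * sPen Q τ g)
    (hsaddle₂f : ∀ f ∈ F, VPQ P Q f g₂ + lam₂ * sPen Q τ g₂
      ≤ VPQ P Q f₂ g₂ + lam₂ * sPen Q τ g₂)
    (hsaddle₂g : ∀ g ∈ G, VPQ P Q f₂ g₂ + lam₂ * sPen Q τ g₂
      ≤ VPQ P Q f₂ g + lam₂ * sPen Q τ g) :
    sPen Q τ g₂ ≤ sPen Q τ g₁ := by
  have A := hsaddle₁g g₂ hg₂
  have B := hsaddle₂g g₁ hg₁
  have C := hsaddle₁f f₂ hf₂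
  have D := hsaddle₂f f₁ hf₁
  nlinarith [sub_nonneg.mpr hlam.le]
end

section
/- Let P, Q be probability measures on ℝ^d, let G be a nonempty set of differentiable functions ℝ^d → ℝ, let τ : ℝ^d → ℝ satisfy 0 ≤ s_τ(g') ≤ M for all g' ∈ G, let λ ≥ 0 and α > 0. Let f, f₀, f_λ : ℝ^d → ℝ, let g, g₀, g_λ ∈ G, and assume g' ↦ V_{P,Q}(f,g') is bounded below on G. Define ε̂₁ = V_{P,Q}(f,g) − inf_{g'∈G} V_{P,Q}(f,g'), ε̂₂ = V_{P,Q}(f₀,g₀) − inf_{g'∈G} V_{P,Q}(f,g'), ε₁ = N_λ(f,g) − inf_{g'∈G} N_λ(f,g'), and ε₂ = N_λ(f_λ,g_λ) − inf_{g'∈G} N_λ(f,g'), where N_λ(f,g) = V_{P,Q}(f,g) + λ s_τ(g). Assume: (i) the strong-convexity map-error bound ∫ ‖∇g(y) − ∇g₀(y)‖² dQ(y) ≤ (2/α)(ε̂₁ + ε̂₂) holds (this is the cited bound valid when f is α-strongly convex), and (ii) V_{P,Q}(f₀,g₀) ≤ V_{P,Q}(f_λ,g_λ) + λ s_τ(g_λ).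 Then ∫ ‖∇g(y) − ∇g₀(y)‖² dQ(y) ≤ (2/α)( ε₁ + ε₂ + 2λM ). -/
open MeasureTheory
open scoped RealInnerProductSpace

/-- Theorem 4.6 of the paper: the squared `L²(Q)` deviation of the biased map `∇g` from the
unbiased ground-truth map `∇g₀` is bounded by `(2/α)(ε₁ + ε₂ + 2λM)`, given the
strong-convexity map-error bound of Makkuva et al. in terms of the unregularized gaps. -/
theorem map_error_bound {d : ℕ} (P Q : Measure (EuclideanSpace ℝ (Fin d)))
    [IsProbabilityMeasure P] [IsProbabilityMeasure Q]
    (G : Set (EuclideanSpace ℝ (Fin d) → ℝ)) (hG : G.Nonempty)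
    (hGdiff : ∀ g' ∈ G, Differentiable ℝ g')
    (τ : EuclideanSpace ℝ (Fin d) → ℝ) (M : ℝ)
    (hs : ∀ g' ∈ G, 0 ≤ sPen Q τ g' ∧ sPen Q τ g' ≤ M)
    (lam : ℝ) (hlam : 0 ≤ lam) (α : ℝ) (hα : 0 < α)
    (f f₀ flam : EuclideanSpace ℝ (Fin d) → ℝ)
    (g g₀ glam : EuclideanSpace ℝ (Fin d) → ℝ)
    (hg : g ∈ G) (hg₀ : g₀ ∈ G) (hglam : glam ∈ G)
    (hbb : BddBelow (Set.range fun g' : G => VPQ P Q f g'.1))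
    -- (i) the cited strong-convexity map-error bound of Makkuva et al. (valid when `f` is
    -- `α`-strongly convex), in terms of the unregularized optimality gaps `ε̂₁, ε̂₂`:
    (hMakkuva : ∫ y, ‖gradient g y - gradient g₀ y‖ ^ 2 ∂Q
      ≤ (2 / α) * ((VPQ P Q f g - ⨅ g' : G, VPQ P Q f g'.1)
          + (VPQ P Q f₀ g₀ - ⨅ g' : G, VPQ P Q f g'.1)))
    -- (ii) the regularized optimum dominates the unregularized one:
    (hJ : VPQ P Q f₀ g₀ ≤ VPQ P Q flam glam + lam * sPen Q τ glam) :
    ∫ y, ‖gradient g y - gradient g₀ y‖ ^ 2 ∂Q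
      ≤ (2 / α) * (((VPQ P Q f g + lam * sPen Q τ g)
            - ⨅ g' : G, (VPQ P Q f g'.1 + lam * sPen Q τ g'.1))
          + ((VPQ P Q flam glam + lam * sPen Q τ glam)
            - ⨅ g' : G, (VPQ P Q f g'.1 + lam * sPen Q τ g'.1))
          + 2 * lam * M) := by

  have hne : Nonempty G := hG.to_subtype
  set A := ⨅ g' : G, VPQ P Q f g'.1 with hA
  set B := ⨅ g' : G, (VPQ P Q f g'.1 + lam * sPen Q τ g'.1) with hB
  have hbbB : BddBelow (Set.range fun g' : G => VPQ P Q f g'.1 + lam * sPen Q τ g'.1) := by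
    obtain ⟨c, hc⟩ := hbb
    refine ⟨c, ?_⟩
    rintro x ⟨g', rfl⟩
    have h1 : c ≤ VPQ P Q f g'.1 := hc ⟨g', rfl⟩
    have h2 : 0 ≤ lam * sPen Q τ g'.1 := mul_nonneg hlam (hs g'.1 g'.2).1
    dsimp only
    linarith
  -- B ≤ A + lam * M
  have hBA : B ≤ A + lam * M := by
    have h1 : B ≤ ⨅ g' : G, (VPQ P Q f g'.1 + lam * M) := by
      refine ciInf_mono hbbB ?_
      intro g'
      have := (hs g'.1 g'.2).2
      nlinarith [mul_le_mul_of_nonneg_left this hlam]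
    have h2 : (⨅ g' : G, (VPQ P Q f g'.1 + lam * M)) = A + lam * M := by
      rw [hA, ciInf_add hbb]
    linarith
  -- eps-hat bounds
  have he1 : VPQ P Q f g - A ≤ (VPQ P Q f g + lam * sPen Q τ g) - B + lam * M := by
    have h2 : 0 ≤ lam * sPen Q τ g := mul_nonneg hlam (hs g hg).1
    linarith
  have he2 : VPQ P Q f₀ g₀ - A ≤ (VPQ P Q flam glam + lam * sPen Q τ glam) - B + lam * M := by
    linarith
  calc ∫ y, ‖gradient g y - gradient g₀ y‖ ^ 2 ∂Q
      ≤ (2 / α) * ((VPQ P Q f g - A) + (VPQ P Q f₀ g₀ - A)) := hMakkuva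
    _ ≤ (2 / α) * (((VPQ P Q f g + lam * sPen Q τ g) - B)
          + ((VPQ P Q flam glam + lam * sPen Q τ glam) - B) + 2 * lam * M) := by
        have hpos : 0 ≤ 2 / α := by positivity
        apply mul_le_mul_of_nonneg_left _ hpos
        linarith
end

section
/- Let P and Q be probability measures on ℝ^d with supports contained in the closed balls of radius R_P and R_Q (respectively) centered at the origin, and let L ≥ 0. Let f_n, f : ℝ^d → ℝ be L-Lipschitz and let g_n, g : ℝ^d → ℝ be differentiable with ‖∇g_n(y)‖ ≤ L and ‖∇g(y)‖ ≤ L for all y in the support of Q, with ∇g_n and ∇g measurable. Assume f_n → f uniformly on the closed ball of radius max(R_P, L) centered at the origin, and ∇g_n → ∇g uniformly on the support of Q. Then V_{P,Q}(f_n, g_n) → V_{P,Q}(f, g). -/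
open MeasureTheory Filter Metric
open scoped RealInnerProductSpace

/-- The (topological) support of a measure: the set of points all of whose neighborhoods
have positive measure. -/
def msupport {d : ℕ} (μ : Measure (EuclideanSpace ℝ (Fin d))) :
    Set (EuclideanSpace ℝ (Fin d)) :=
  {x | ∀ U ∈ nhds x, μ U ≠ 0}

lemma msupport_compl_null {d : ℕ} (μ : Measure (EuclideanSpace ℝ (Fin d))) :
    μ (msupport μ)ᶜ = 0 := by
  have h : ∀ x ∈ (msupport μ)ᶜ, ∃ U : Set (EuclideanSpace ℝ (Fin d)),
      IsOpen U ∧ x ∈ U ∧ μ U = 0 := by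
    intro x hx
    simp only [msupport, Set.mem_compl_iff, Set.mem_setOf_eq, not_forall] at hx
    obtain ⟨U, hU, hμ⟩ := hx
    rw [not_not] at hμ
    obtain ⟨V, hVU, hVopen, hxV⟩ := _root_.mem_nhds_iff.mp hU
    exact ⟨V, hVopen, hxV, measure_mono_null hVU hμ⟩
  choose! U hUo hxU hU0 using h
  have hcover : (msupport μ)ᶜ ⊆ ⋃ x : {x // x ∈ (msupport μ)ᶜ}, U x :=
    fun x hx => Set.mem_iUnion.mpr ⟨⟨x, hx⟩, hxU x hx⟩
  obtain ⟨T, hTc, hTeq⟩ := TopologicalSpace.isOpen_iUnion_countable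
    (fun x : {x // x ∈ (msupport μ)ᶜ} => U x) (fun x => hUo x x.2)
  have hnull : μ (⋃ i ∈ T, U ↑i) = 0 :=
    (measure_biUnion_null_iff hTc).mpr fun x _ => hU0 x x.2
  exact measure_mono_null (hTeq ▸ hcover) hnull

/-- Continuity part of Lemma A.2 of the paper: `V_{P,Q}` is continuous with respect to
uniform convergence of `(f,g)` on the class of `L`-Lipschitz potentials when `P` and `Q`
have bounded support. -/
theorem VPQ_continuous {d : ℕ} (P Q : Measure (EuclideanSpace ℝ (Fin d)))
    [IsProbabilityMeasure P] [IsProbabilityMeasure Q]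
    (RP RQ : ℝ) (hRP : 0 ≤ RP) (hRQ : 0 ≤ RQ)
    (hPsupp : msupport P ⊆ closedBall (0 : EuclideanSpace ℝ (Fin d)) RP)
    (hQsupp : msupport Q ⊆ closedBall (0 : EuclideanSpace ℝ (Fin d)) RQ)
    (L : ℝ) (hL : 0 ≤ L)
    (fn : ℕ → EuclideanSpace ℝ (Fin d) → ℝ) (f : EuclideanSpace ℝ (Fin d) → ℝ)
    (hfnLip : ∀ n, LipschitzWith (Real.toNNReal L) (fn n))
    (hfLip : LipschitzWith (Real.toNNReal L) f)
    (gn : ℕ → EuclideanSpace ℝ (Fin d) → ℝ) (g : EuclideanSpace ℝ (Fin d) → ℝ)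
    (hgn : ∀ n, Differentiable ℝ (gn n)) (hg : Differentiable ℝ g)
    (hgnb : ∀ n, ∀ y ∈ msupport Q, ‖gradient (gn n) y‖ ≤ L)
    (hgb : ∀ y ∈ msupport Q, ‖gradient g y‖ ≤ L)
    (hgnm : ∀ n, Measurable (fun y => gradient (gn n) y))
    (hgm : Measurable (fun y => gradient g y))
    (hfu : TendstoUniformlyOn fn f atTop
      (closedBall (0 : EuclideanSpace ℝ (Fin d)) (max RP L)))
    (hgu : TendstoUniformlyOn (fun n y => gradient (gn n) y)
      (fun y => gradient g y) atTop (msupport Q)) :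
    Tendsto (fun n => VPQ P Q (fn n) (gn n)) atTop (nhds (VPQ P Q f g)) := by
  have aeP : ∀ᵐ x ∂P, x ∈ msupport P := by
    rw [ae_iff]
    exact msupport_compl_null P
  have aeQ : ∀ᵐ y ∂Q, y ∈ msupport Q := by
    rw [ae_iff]
    exact msupport_compl_null Q
  -- helper: bound on Lipschitz functions
  have hlipb : ∀ (φ : EuclideanSpace ℝ (Fin d) → ℝ),
      LipschitzWith (Real.toNNReal L) φ → ∀ (x : EuclideanSpace ℝ (Fin d)) (R : ℝ),
      ‖x‖ ≤ R → ‖φ x‖ ≤ L * R + ‖φ 0‖ := by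
    intro φ hφ x R hx
    have h1 : ‖φ x - φ 0‖ ≤ L * ‖x - 0‖ := by
      have := hφ.dist_le_mul x 0
      rwa [Real.dist_eq, Real.coe_toNNReal _ hL, dist_eq_norm] at this
    have h0 : ‖φ x‖ ≤ ‖φ x - φ 0‖ + ‖φ 0‖ := by
      simpa using norm_add_le (φ x - φ 0) (φ 0)
    calc ‖φ x‖ ≤ ‖φ x - φ 0‖ + ‖φ 0‖ := h0
      _ ≤ L * R + ‖φ 0‖ := by
        simp only [sub_zero] at h1
        have := mul_le_mul_of_nonneg_left hx hL
        linarith [h1]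
  -- integrability of Lipschitz functions wrt P
  have hintP : ∀ (φ : EuclideanSpace ℝ (Fin d) → ℝ),
      LipschitzWith (Real.toNNReal L) φ → Integrable φ P := by
    intro φ hφ
    refine ⟨(hφ.continuous).aestronglyMeasurable, HasFiniteIntegral.of_bounded
      (C := L * RP + ‖φ 0‖) ?_⟩
    filter_upwards [aeP] with x hx
    exact hlipb φ hφ x RP (by simpa using hPsupp hx)
  -- integrability of the second-term integrands
  have hintQ : ∀ (φ : EuclideanSpace ℝ (Fin d) → ℝ)
      (G : EuclideanSpace ℝ (Fin d) → EuclideanSpace ℝ (Fin d)),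
      LipschitzWith (Real.toNNReal L) φ → Measurable G →
      (∀ y ∈ msupport Q, ‖G y‖ ≤ L) →
      Integrable (fun y => ⟪y, G y⟫ - φ (G y)) Q := by
    intro φ G hφ hGm hGb
    have hmeas : AEStronglyMeasurable (fun y => ⟪y, G y⟫ - φ (G y)) Q := by
      refine (AEStronglyMeasurable.sub ?_ ?_)
      · exact (Measurable.inner measurable_id hGm).aestronglyMeasurable
      · exact (hφ.continuous.measurable.comp hGm).aestronglyMeasurable
    refine ⟨hmeas, HasFiniteIntegral.of_bounded
      (C := RQ * L + (L * L + ‖φ 0‖)) ?_⟩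
    filter_upwards [aeQ] with y hy
    have hyR : ‖y‖ ≤ RQ := by simpa using hQsupp hy
    have hGy : ‖G y‖ ≤ L := hGb y hy
    have h1 : ‖⟪y, G y⟫‖ ≤ RQ * L := by
      calc ‖⟪y, G y⟫‖ ≤ ‖y‖ * ‖G y‖ := norm_inner_le_norm y (G y)
        _ ≤ RQ * L := mul_le_mul hyR hGy (norm_nonneg _) hRQ
    have h2 : ‖φ (G y)‖ ≤ L * L + ‖φ 0‖ := hlipb φ hφ (G y) L hGy
    calc ‖⟪y, G y⟫ - φ (G y)‖ ≤ ‖⟪y, G y⟫‖ + ‖φ (G y)‖ := norm_sub_le _ _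
      _ ≤ RQ * L + (L * L + ‖φ 0‖) := add_le_add h1 h2
  -- first term converges
  have h1 : Tendsto (fun n => ∫ x, fn n x ∂P) atTop (nhds (∫ x, f x ∂P)) := by
    rw [← tendsto_sub_nhds_zero_iff]
    rw [NormedAddCommGroup.tendsto_nhds_zero]
    intro ε hε
    filter_upwards [Metric.tendstoUniformlyOn_iff.mp hfu (ε / 2) (half_pos hε)] with n hn
    have hsub : ∫ x, fn n x ∂P - ∫ x, f x ∂P = ∫ x, (fn n x - f x) ∂P :=
      (integral_sub (hintP _ (hfnLip n)) (hintP _ hfLip)).symm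
    rw [hsub]
    have hb : ∀ᵐ x ∂P, ‖fn n x - f x‖ ≤ ε / 2 := by
      filter_upwards [aeP] with x hx
      have hxB : x ∈ closedBall (0 : EuclideanSpace ℝ (Fin d)) (max RP L) :=
        closedBall_subset_closedBall (le_max_left _ _) (hPsupp hx)
      have := (hn x hxB).le
      rwa [Real.dist_eq, abs_sub_comm] at this
    calc ‖∫ x, (fn n x - f x) ∂P‖ ≤ ε / 2 * (P Set.univ).toReal :=
        norm_integral_le_of_norm_le_const hb
      _ < ε := by simp; linarith
  -- second term converges
  have h2 : Tendsto (fun n => ∫ y, (⟪y, gradient (gn n) y⟫ - fn n (gradient (gn n) y)) ∂Q)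
      atTop (nhds (∫ y, (⟪y, gradient g y⟫ - f (gradient g y)) ∂Q)) := by
    rw [← tendsto_sub_nhds_zero_iff]
    rw [NormedAddCommGroup.tendsto_nhds_zero]
    intro ε hε
    set δ : ℝ := ε / (2 * (RQ + L + 1)) with hδdef
    have hden : 0 < RQ + L + 1 := by linarith
    have hδ : 0 < δ := by positivity
    filter_upwards [Metric.tendstoUniformlyOn_iff.mp hfu δ hδ,
      Metric.tendstoUniformlyOn_iff.mp hgu δ hδ] with n hfn hgn'
    have hsub : (∫ y, (⟪y, gradient (gn n) y⟫ - fn n (gradient (gn n) y)) ∂Q)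
        - ∫ y, (⟪y, gradient g y⟫ - f (gradient g y)) ∂Q
        = ∫ y, ((⟪y, gradient (gn n) y⟫ - fn n (gradient (gn n) y))
            - (⟪y, gradient g y⟫ - f (gradient g y))) ∂Q :=
      (integral_sub (hintQ _ _ (hfnLip n) (hgnm n) (hgnb n))
        (hintQ _ _ hfLip hgm hgb)).symm
    rw [hsub]
    have hb : ∀ᵐ y ∂Q, ‖(⟪y, gradient (gn n) y⟫ - fn n (gradient (gn n) y))
        - (⟪y, gradient g y⟫ - f (gradient g y))‖ ≤ ε / 2 := by
      filter_upwards [aeQ] with y hy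
      have hyR : ‖y‖ ≤ RQ := by simpa using hQsupp hy
      have hGdist : ‖gradient (gn n) y - gradient g y‖ ≤ δ := by
        have := (hgn' y hy).le
        rwa [dist_eq_norm, norm_sub_rev] at this
      have hGb1 : gradient g y ∈ closedBall (0 : EuclideanSpace ℝ (Fin d)) (max RP L) := by
        rw [mem_closedBall_zero_iff]
        exact le_trans (hgb y hy) (le_max_right _ _)
      have hA : ‖⟪y, gradient (gn n) y⟫ - ⟪y, gradient g y⟫‖ ≤ RQ * δ := by
        rw [← inner_sub_right]
        calc ‖⟪y, gradient (gn n) y - gradient g y⟫‖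
            ≤ ‖y‖ * ‖gradient (gn n) y - gradient g y‖ := norm_inner_le_norm _ _
          _ ≤ RQ * δ := mul_le_mul hyR hGdist (norm_nonneg _) hRQ
      have hB : ‖fn n (gradient (gn n) y) - fn n (gradient g y)‖ ≤ L * δ := by
        have := (hfnLip n).dist_le_mul (gradient (gn n) y) (gradient g y)
        rw [Real.dist_eq, Real.coe_toNNReal _ hL, dist_eq_norm] at this
        exact le_trans this (mul_le_mul_of_nonneg_left hGdist hL)
      have hC : ‖fn n (gradient g y) - f (gradient g y)‖ ≤ δ := by
        have := (hfn (gradient g y) hGb1).le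
        rwa [Real.dist_eq, abs_sub_comm] at this
      have key : ‖(⟪y, gradient (gn n) y⟫ - fn n (gradient (gn n) y))
          - (⟪y, gradient g y⟫ - f (gradient g y))‖
          ≤ RQ * δ + (L * δ + δ) := by
        have heq : (⟪y, gradient (gn n) y⟫ - fn n (gradient (gn n) y))
            - (⟪y, gradient g y⟫ - f (gradient g y))
            = (⟪y, gradient (gn n) y⟫ - ⟪y, gradient g y⟫)
              - ((fn n (gradient (gn n) y) - fn n (gradient g y))
                + (fn n (gradient g y) - f (gradient g y))) := by ring
        rw [heq]
        calc _ ≤ ‖⟪y, gradient (gn n) y⟫ - ⟪y, gradient g y⟫‖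
              + ‖(fn n (gradient (gn n) y) - fn n (gradient g y))
                + (fn n (gradient g y) - f (gradient g y))‖ := norm_sub_le _ _
          _ ≤ RQ * δ + (L * δ + δ) := by
            refine add_le_add hA (le_trans (norm_add_le _ _) (add_le_add hB hC))
      refine le_trans key ?_
      have : RQ * δ + (L * δ + δ) = (RQ + L + 1) * δ := by ring
      rw [this, hδdef]
      have heq2 : (RQ + L + 1) * (ε / (2 * (RQ + L + 1))) = ε / 2 := by
        field_simp
      exact le_of_eq heq2
    calc ‖∫ y, ((⟪y, gradient (gn n) y⟫ - fn n (gradient (gn n) y))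
          - (⟪y, gradient g y⟫ - f (gradient g y))) ∂Q‖
        ≤ ε / 2 * (Q Set.univ).toReal := norm_integral_le_of_norm_le_const hb
      _ < ε := by simp; linarith
  simpa only [VPQ] using (h1.neg).sub h2
end

section
/- Let P and Q be probability measures on ℝ^d with supports contained in the closed balls of radius R_P and R_Q (respectively) centered at the origin, let L ≥ 0, let τ : ℝ^d → ℝ, and let M, J₀ ∈ ℝ. Let λ_n ≥ 0 with λ_n → 0, and let (f_n, g_n) be a sequence with each f_n L-Lipschitz and each g_n differentiable with ‖∇g_n(y)‖ ≤ L on the support of Q and ∇g_n measurable. Assume: (i) V_{P,Q}(f_n, g_n) + λ_n s_τ(g_n) → J₀; (ii) 0 ≤ s_τ(g_n) ≤ M for all n; (iii) f_n → f' uniformly on the closed ball of radius max(R_P, L) centered at the origin, where f' is L-Lipschitz; and (iv) ∇g_n → ∇g' uniformly on the support of Q, where g' is differentiable with ‖∇g'(y)‖ ≤ L on the support of Q and ∇g' measurable. Then V_{P,Q}(f', g') = J₀. -/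
open MeasureTheory Filter Metric
open scoped RealInnerProductSpace

/-- Almost every point lies in the (topological) support of the measure. -/
lemma ae_mem_msupport {d : ℕ} (μ : Measure (EuclideanSpace ℝ (Fin d))) :
    ∀ᵐ x ∂μ, x ∈ msupport μ := by
  rw [ae_iff]
  refine measure_null_of_locally_null _ (fun x hx => ?_)
  simp only [Set.mem_setOf_eq, msupport, not_forall, not_not] at hx
  obtain ⟨U, hU, hU0⟩ := hx
  exact ⟨U, nhdsWithin_le_nhds hU, hU0⟩

/-- Uniform convergence on an a.e.-full set implies convergence of integrals
(for a probability measure and integrable functions). -/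
lemma tendsto_integral_of_unif {d : ℕ} (μ : Measure (EuclideanSpace ℝ (Fin d)))
    [IsProbabilityMeasure μ] (S : Set (EuclideanSpace ℝ (Fin d)))
    (hS : ∀ᵐ x ∂μ, x ∈ S)
    (F : ℕ → EuclideanSpace ℝ (Fin d) → ℝ) (f : EuclideanSpace ℝ (Fin d) → ℝ)
    (hFi : ∀ n, Integrable (F n) μ) (hfi : Integrable f μ)
    (h : TendstoUniformlyOn F f atTop S) :
    Tendsto (fun n => ∫ x, F n x ∂μ) atTop (nhds (∫ x, f x ∂μ)) := by
  rw [Metric.tendsto_atTop]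
  intro ε hε
  obtain ⟨N, hN⟩ := Filter.eventually_atTop.mp
    ((Metric.tendstoUniformlyOn_iff.mp h) (ε/2) (by positivity))
  refine ⟨N, fun n hn => ?_⟩
  have hb : ∀ᵐ x ∂μ, ‖F n x - f x‖ ≤ ε/2 := by
    filter_upwards [hS] with x hx
    have h1 := hN n hn x hx
    rw [Real.dist_eq, abs_sub_comm] at h1
    simpa [Real.norm_eq_abs] using h1.le
  have h2 := norm_integral_le_of_norm_le_const hb
  rw [integral_sub (hFi n) hfi] at h2
  simp only [measure_univ, ENNReal.toReal_one, probReal_univ, mul_one] at h2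
  rw [Real.dist_eq]
  calc |∫ x, F n x ∂μ - ∫ x, f x ∂μ| ≤ ε/2 := by simpa [Real.norm_eq_abs] using h2
    _ < ε := by linarith

/-- A Lipschitz function is bounded in terms of its value at the origin. -/
lemma lip_abs_le {d : ℕ} {L : ℝ} (hL : 0 ≤ L) (f : EuclideanSpace ℝ (Fin d) → ℝ)
    (hf : LipschitzWith (Real.toNNReal L) f) (x : EuclideanSpace ℝ (Fin d)) :
    |f x| ≤ |f 0| + L * ‖x‖ := by
  have h := hf.dist_le_mul x 0
  rw [Real.dist_eq, dist_zero_right, Real.coe_toNNReal L hL] at h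
  have h2 : |f x| ≤ |f x - f 0| + |f 0| := by
    have := abs_add_le (f x - f 0) (f 0)
    simpa using this
  linarith

private lemma abs_sub_sub_le (a b c : ℝ) : |a - b - c| ≤ |a| + |b| + |c| := by
  have h1 : |a - b - c| ≤ |a - b| + |c| := abs_sub _ _
  have h2 : |a - b| ≤ |a| + |b| := abs_sub _ _
  linarith

/-- Key step in the proof of Theorem 4.4 of the paper: every uniform limit `(f', g')`
of regularized optimal solutions `(f_{λₙ}, g_{λₙ})` with `λₙ → 0` and
`V_{P,Q}(fₙ,gₙ) + λₙ s_τ(gₙ) → J₀` attains the unregularized optimal value: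
`V_{P,Q}(f',g') = J₀`. -/
theorem limit_attains_J0 {d : ℕ} (P Q : Measure (EuclideanSpace ℝ (Fin d)))
    [IsProbabilityMeasure P] [IsProbabilityMeasure Q]
    (RP RQ : ℝ) (hRP : 0 ≤ RP) (hRQ : 0 ≤ RQ)
    (hPsupp : msupport P ⊆ closedBall (0 : EuclideanSpace ℝ (Fin d)) RP)
    (hQsupp : msupport Q ⊆ closedBall (0 : EuclideanSpace ℝ (Fin d)) RQ)
    (L : ℝ) (hL : 0 ≤ L)
    (τ : EuclideanSpace ℝ (Fin d) → ℝ) (M J₀ : ℝ)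
    (lamn : ℕ → ℝ) (hlamn : ∀ n, 0 ≤ lamn n)
    (hlam0 : Tendsto lamn atTop (nhds 0))
    (fn : ℕ → EuclideanSpace ℝ (Fin d) → ℝ)
    (gn : ℕ → EuclideanSpace ℝ (Fin d) → ℝ)
    (hfnLip : ∀ n, LipschitzWith (Real.toNNReal L) (fn n))
    (hgn : ∀ n, Differentiable ℝ (gn n))
    (hgnb : ∀ n, ∀ y ∈ msupport Q, ‖gradient (gn n) y‖ ≤ L)
    (hgnm : ∀ n, Measurable (fun y => gradient (gn n) y))
    -- (i) the regularized values converge to `J₀`: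
    (hval : Tendsto (fun n => VPQ P Q (fn n) (gn n) + lamn n * sPen Q τ (gn n))
      atTop (nhds J₀))
    -- (ii) the sparsity penalties are uniformly bounded:
    (hsb : ∀ n, 0 ≤ sPen Q τ (gn n) ∧ sPen Q τ (gn n) ≤ M)
    -- (iii) `fₙ → f'` uniformly on the closed ball of radius `max RP L`:
    (f' : EuclideanSpace ℝ (Fin d) → ℝ) (hf'Lip : LipschitzWith (Real.toNNReal L) f')
    (hfu : TendstoUniformlyOn fn f' atTop
      (closedBall (0 : EuclideanSpace ℝ (Fin d)) (max RP L)))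
    -- (iv) `∇gₙ → ∇g'` uniformly on the support of `Q`:
    (g' : EuclideanSpace ℝ (Fin d) → ℝ) (hg' : Differentiable ℝ g')
    (hg'b : ∀ y ∈ msupport Q, ‖gradient g' y‖ ≤ L)
    (hg'm : Measurable (fun y => gradient g' y))
    (hgu : TendstoUniformlyOn (fun n y => gradient (gn n) y)
      (fun y => gradient g' y) atTop (msupport Q)) :
    VPQ P Q f' g' = J₀ := by
  have hPae : ∀ᵐ x ∂P, x ∈ msupport P := ae_mem_msupport P
  have hQae : ∀ᵐ y ∂Q, y ∈ msupport Q := ae_mem_msupport Q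
  have hPball : ∀ᵐ x ∂P, x ∈ closedBall (0 : EuclideanSpace ℝ (Fin d)) (max RP L) := by
    filter_upwards [hPae] with x hx
    exact closedBall_subset_closedBall (le_max_left _ _) (hPsupp hx)
  -- integrability over P
  have hPint : ∀ (f : EuclideanSpace ℝ (Fin d) → ℝ),
      LipschitzWith (Real.toNNReal L) f → Integrable f P := by
    intro f hf
    refine (integrable_const (|f 0| + L * RP)).mono' hf.continuous.aestronglyMeasurable ?_
    filter_upwards [hPae] with x hx
    have hx' : ‖x‖ ≤ RP := by
      simpa [mem_closedBall, dist_zero_right] using hPsupp hx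
    have h1 := lip_abs_le hL f hf x
    have h2 : L * ‖x‖ ≤ L * RP := mul_le_mul_of_nonneg_left hx' hL
    simp only [Real.norm_eq_abs]
    linarith
  -- integrability over Q of the dual integrands
  have hQint : ∀ (f : EuclideanSpace ℝ (Fin d) → ℝ)
      (G : EuclideanSpace ℝ (Fin d) → EuclideanSpace ℝ (Fin d)),
      LipschitzWith (Real.toNNReal L) f → Measurable G →
      (∀ y ∈ msupport Q, ‖G y‖ ≤ L) →
      Integrable (fun y => (⟪y, G y⟫ : ℝ) - f (G y)) Q := by
    intro f G hf hGm hGb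
    have hm : AEStronglyMeasurable (fun y => (⟪y, G y⟫ : ℝ) - f (G y)) Q :=
      ((measurable_id.inner hGm).sub (hf.continuous.measurable.comp hGm)).aestronglyMeasurable
    refine (integrable_const (RQ * L + (|f 0| + L * L))).mono' hm ?_
    filter_upwards [hQae] with y hy
    have hy' : ‖y‖ ≤ RQ := by
      simpa [mem_closedBall, dist_zero_right] using hQsupp hy
    have hG : ‖G y‖ ≤ L := hGb y hy
    have h1 : |(⟪y, G y⟫ : ℝ)| ≤ RQ * L :=
      (abs_real_inner_le_norm y (G y)).trans (mul_le_mul hy' hG (norm_nonneg _) hRQ)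
    have h2 : |f (G y)| ≤ |f 0| + L * L :=
      (lip_abs_le hL f hf (G y)).trans
        (add_le_add_right (mul_le_mul_of_nonneg_left hG hL) _)
    have h3 : |(⟪y, G y⟫ : ℝ) - f (G y)| ≤ |(⟪y, G y⟫ : ℝ)| + |f (G y)| := abs_sub _ _
    simp only [Real.norm_eq_abs]
    linarith
  have hfnInt : ∀ n, Integrable (fn n) P := fun n => hPint (fn n) (hfnLip n)
  have hf'Int : Integrable f' P := hPint f' hf'Lip
  have hInInt : ∀ n, Integrable
      (fun y => (⟪y, gradient (gn n) y⟫ : ℝ) - fn n (gradient (gn n) y)) Q :=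
    fun n => hQint (fn n) _ (hfnLip n) (hgnm n) (hgnb n)
  have hI'Int : Integrable (fun y => (⟪y, gradient g' y⟫ : ℝ) - f' (gradient g' y)) Q :=
    hQint f' _ hf'Lip hg'm hg'b
  -- uniform convergence of the dual integrands on the support of Q
  have hIu : TendstoUniformlyOn
      (fun n y => (⟪y, gradient (gn n) y⟫ : ℝ) - fn n (gradient (gn n) y))
      (fun y => (⟪y, gradient g' y⟫ : ℝ) - f' (gradient g' y)) atTop (msupport Q) := by
    rw [Metric.tendstoUniformlyOn_iff]
    intro ε hε
    have hc : (0:ℝ) < RQ + L + 1 := by linarith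
    set δ := ε / (2 * (RQ + L + 1)) with hδdef
    have hδ : 0 < δ := by positivity
    have key : (RQ + L) * δ ≤ ε / 2 := by
      have h1 : (RQ + L) * δ ≤ (RQ + L + 1) * δ :=
        mul_le_mul_of_nonneg_right (by linarith) hδ.le
      have h2 : (RQ + L + 1) * δ = ε / 2 := by
        rw [hδdef]; field_simp
      linarith
    filter_upwards [Metric.tendstoUniformlyOn_iff.mp hgu δ hδ,
      Metric.tendstoUniformlyOn_iff.mp hfu (ε/2) (by positivity)] with n hg hf y hy
    have hyRQ : ‖y‖ ≤ RQ := by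
      simpa [mem_closedBall, dist_zero_right] using hQsupp hy
    have hg'y : ‖gradient g' y‖ ≤ L := hg'b y hy
    have hmem : gradient g' y ∈ closedBall (0 : EuclideanSpace ℝ (Fin d)) (max RP L) := by
      simp only [mem_closedBall, dist_zero_right]
      exact hg'y.trans (le_max_right _ _)
    have hdn : ‖gradient g' y - gradient (gn n) y‖ < δ := by
      have := hg y hy; rwa [dist_eq_norm] at this
    have hA : |(⟪y, gradient g' y⟫ : ℝ) - ⟪y, gradient (gn n) y⟫| ≤
        ‖y‖ * ‖gradient g' y - gradient (gn n) y‖ := by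
      rw [← inner_sub_right]
      exact abs_real_inner_le_norm _ _
    have hA2 : ‖y‖ * ‖gradient g' y - gradient (gn n) y‖ ≤ RQ * δ :=
      mul_le_mul hyRQ hdn.le (norm_nonneg _) hRQ
    have hB1 : |f' (gradient g' y) - fn n (gradient g' y)| < ε / 2 := by
      have := hf (gradient g' y) hmem
      rwa [Real.dist_eq] at this
    have hB2 : |fn n (gradient g' y) - fn n (gradient (gn n) y)| ≤ L * δ := by
      have h := (hfnLip n).dist_le_mul (gradient g' y) (gradient (gn n) y)
      rw [Real.dist_eq, dist_eq_norm, Real.coe_toNNReal L hL] at h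
      exact h.trans (mul_le_mul_of_nonneg_left hdn.le hL)
    rw [Real.dist_eq]
    have heq : ((⟪y, gradient g' y⟫ : ℝ) - f' (gradient g' y)) -
        ((⟪y, gradient (gn n) y⟫ : ℝ) - fn n (gradient (gn n) y)) =
        ((⟪y, gradient g' y⟫ : ℝ) - ⟪y, gradient (gn n) y⟫) -
        (f' (gradient g' y) - fn n (gradient g' y)) -
        (fn n (gradient g' y) - fn n (gradient (gn n) y)) := by ring
    rw [heq]
    have htri := abs_sub_sub_le ((⟪y, gradient g' y⟫ : ℝ) - ⟪y, gradient (gn n) y⟫)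
      (f' (gradient g' y) - fn n (gradient g' y))
      (fn n (gradient g' y) - fn n (gradient (gn n) y))
    linarith
  -- convergence of the two integrals
  have hP1 : Tendsto (fun n => ∫ x, fn n x ∂P) atTop (nhds (∫ x, f' x ∂P)) :=
    tendsto_integral_of_unif P _ hPball fn f' hfnInt hf'Int hfu
  have hQ1 : Tendsto
      (fun n => ∫ y, ((⟪y, gradient (gn n) y⟫ : ℝ) - fn n (gradient (gn n) y)) ∂Q)
      atTop (nhds (∫ y, ((⟪y, gradient g' y⟫ : ℝ) - f' (gradient g' y)) ∂Q)) :=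
    tendsto_integral_of_unif Q _ hQae _ _ hInInt hI'Int hIu
  have hV : Tendsto (fun n => VPQ P Q (fn n) (gn n)) atTop (nhds (VPQ P Q f' g')) := by
    simp only [VPQ]
    exact hP1.neg.sub hQ1
  -- the penalty term vanishes
  have hpen : Tendsto (fun n => lamn n * sPen Q τ (gn n)) atTop (nhds 0) := by
    apply squeeze_zero (fun n => mul_nonneg (hlamn n) (hsb n).1)
      (fun n => mul_le_mul_of_nonneg_left (hsb n).2 (hlamn n))
    simpa using hlam0.mul_const M
  have hsum : Tendsto (fun n => VPQ P Q (fn n) (gn n) + lamn n * sPen Q τ (gn n))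
      atTop (nhds (VPQ P Q f' g' + 0)) := hV.add hpen
  have := tendsto_nhds_unique hsum hval
  linarith
end
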